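/- Let L be a first-order language, M a nonempty L-structure, α and β finite types, and φ an L-formula in the free variables α ⊕ β. Let A be the family of functions f_a : (β → M) → ℝ, for a : α → M, defined by f_a(b) = 1 if φ(a,b) holds and f_a(b) = 0 otherwise. Assume φ satisfies the double limit condition in M: for all sequences a : ℕ → (α → M) and b : ℕ → (β → M), writing χ(m,n) = 1 if φ(a m, b n) holds and 0 otherwise, whenever both iterated limits lim_n lim_m χ(m,n) and lim_m lim_n χ(m,n) exist, they are equal. Then for every function g : (β → M) → ℝ lying in the closure of A in the product topology on ℝ^(β → M), there exists a subset s of (β → M) that is definable in the structure M with parameters from M such that g is the indicator function of s (g(b) = 1 if b ∈ s and g(b) = 0 otherwise). -/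

import Mathlib

open Filter Topology FirstOrder

lemma exists_infinite_bool_fiber {T : Set ℕ} (hT : T.Infinite) (u : ℕ → Bool) :
    ∃ v, {k | k ∈ T ∧ u k = v}.Infinite := by
  by_contra h
  push_neg at h
  have hsub : T ⊆ {k | k ∈ T ∧ u k = true} ∪ {k | k ∈ T ∧ u k = false} := by
    intro k hk
    cases hu : u k
    · exact Or.inr ⟨hk, hu⟩
    · exact Or.inl ⟨hk, hu⟩
  exact hT (Set.Finite.subset
    ((h true).union (h false)) hsub)

lemma exists_diag_subseq (u : ℕ → ℕ → Bool) :
    ∃ I : ℕ → ℕ, StrictMono I ∧ ∀ m, ∃ v, ∀ n, m ≤ n → u m (I n) = v := by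
  classical
  let S : ℕ → {T : Set ℕ // T.Infinite} := fun n =>
    Nat.rec ⟨Set.univ, Set.infinite_univ⟩
      (fun m prev => ⟨_, (exists_infinite_bool_fiber prev.2 (u m)).choose_spec⟩) n
  have hstep : ∀ m, (S (m+1)).1 =
      {k | k ∈ (S m).1 ∧ u m k = (exists_infinite_bool_fiber (S m).2 (u m)).choose} :=
    fun m => rfl
  have hsub : ∀ m, (S (m+1)).1 ⊆ (S m).1 := by
    intro m k hk
    rw [hstep] at hk
    exact hk.1
  have hmono : ∀ m n, m ≤ n → (S n).1 ⊆ (S m).1 := by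
    intro m n hmn
    induction n with
    | zero => simp_all
    | succ n ih =>
      rcases Nat.lt_or_ge m (n+1) with h | h
      · exact fun k hk => ih (Nat.lt_succ_iff.mp h) (hsub n hk)
      · have : m = n + 1 := le_antisymm hmn h
        subst this; exact fun _ h => h
  let I : ℕ → ℕ := fun n =>
    Nat.rec ((S 1).2.exists_gt 0).choose
      (fun n prev => ((S (n+2)).2.exists_gt prev).choose) n
  have hImem : ∀ n, I n ∈ (S (n+1)).1 := by
    intro n
    cases n with
    | zero => exact ((S 1).2.exists_gt 0).choose_spec.1
    | succ n => exact ((S (n+2)).2.exists_gt (I n)).choose_spec.1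
  have hIlt : ∀ n, I n < I (n+1) := fun n =>
    ((S (n+2)).2.exists_gt (I n)).choose_spec.2
  refine ⟨I, strictMono_nat_of_lt_succ hIlt, fun m => ?_⟩
  refine ⟨(exists_infinite_bool_fiber (S m).2 (u m)).choose, fun n hmn => ?_⟩
  have hmem : I n ∈ (S (m+1)).1 := hmono (m+1) (n+1) (Nat.succ_le_succ hmn) (hImem n)
  rw [hstep] at hmem
  exact hmem.2

open Classical in
/-- Local fundamental theorem of stability via Grothendieck: if a formula `φ` satisfies
the double limit condition in a structure `M`, then every function in the pointwise
closure of the family of indicator functions of instances `φ(a, -)` is the indicator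
function of a subset of `β → M` definable in `M` with parameters. -/
theorem definable_of_double_limit_condition {L : Language} {M : Type*} [L.Structure M]
    [Nonempty M] {α β : Type*} [Finite α] [Finite β]
    (φ : L.Formula (α ⊕ β))
    (hdl : ∀ (a : ℕ → α → M) (b : ℕ → β → M) (c d : ℕ → ℝ) (r s : ℝ),
        (∀ n, Tendsto
          (fun m => if φ.Realize (Sum.elim (a m) (b n)) then (1 : ℝ) else 0)
          atTop (𝓝 (c n))) →
        Tendsto c atTop (𝓝 r) →
        (∀ m, Tendsto
          (fun n => if φ.Realize (Sum.elim (a m) (b n)) then (1 : ℝ) else 0)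
          atTop (𝓝 (d m))) →
        Tendsto d atTop (𝓝 s) →
        r = s) :
    ∀ g ∈ closure
        { f : (β → M) → ℝ | ∃ a : α → M,
            f = fun b => if φ.Realize (Sum.elim a b) then (1 : ℝ) else 0 },
      ∃ s : Set (β → M),
        (Set.univ : Set M).Definable L s ∧
        g = s.indicator 1 := by
  intro g hg
  set P : (α → M) → (β → M) → Prop := fun a b => φ.Realize (Sum.elim a b) with hP
  -- g is {0,1}-valued
  have hg01 : ∀ b, g b = 0 ∨ g b = 1 := by
    intro b
    have hclosed : IsClosed {f : (β → M) → ℝ | f b ∈ ({0, 1} : Set ℝ)} :=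
      (Set.toFinite ({0,1} : Set ℝ)).isClosed.preimage (continuous_apply b)
    have hsub : { f : (β → M) → ℝ | ∃ a : α → M,
        f = fun b => if φ.Realize (Sum.elim a b) then (1 : ℝ) else 0 } ⊆
        {f : (β → M) → ℝ | f b ∈ ({0, 1} : Set ℝ)} := by
      rintro f ⟨a, rfl⟩
      by_cases h : φ.Realize (Sum.elim a b) <;> simp [h]
    have := closure_minimal hsub hclosed hg
    simpa using this
  -- approximation: on any finite set of points we can match g exactly by an instance
  have happrox : ∀ F : Finset (β → M), ∃ a : α → M,
      ∀ x ∈ F, (if P a x then (1:ℝ) else 0) = g x := by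
    intro F
    have hU : IsOpen {f : (β → M) → ℝ | ∀ x ∈ F, |f x - g x| < 1/2} := by
      have heq : {f : (β → M) → ℝ | ∀ x ∈ F, |f x - g x| < 1/2} =
          ⋂ x ∈ F, (fun f : (β → M) → ℝ => f x) ⁻¹' Metric.ball (g x) (1/2) := by
        ext f
        simp [Real.dist_eq]
      rw [heq]
      exact isOpen_biInter_finset fun x _ => Metric.isOpen_ball.preimage (continuous_apply x)
    have hgU : g ∈ {f : (β → M) → ℝ | ∀ x ∈ F, |f x - g x| < 1/2} := by
      intro x _; simp
    obtain ⟨f, hfU, a, rfl⟩ := mem_closure_iff.mp hg _ hU hgU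
    refine ⟨a, fun x hx => ?_⟩
    have h2 := hfU x hx
    simp only [Set.mem_setOf_eq] at h2
    by_cases hq : φ.Realize (Sum.elim a x)
    · rw [if_pos (show P a x from hq)]
      rcases hg01 x with h | h
      · exfalso
        simp only [if_pos hq, h] at h2
        norm_num at h2
      · exact h.symm
    · rw [if_neg (show ¬ P a x from hq)]
      rcases hg01 x with h | h
      · exact h.symm
      · exfalso
        simp only [if_neg hq, h] at h2
        norm_num at h2
  set s : Set (β → M) := {b | g b = 1} with hs
  have hind : g = s.indicator 1 := by
    funext b
    rcases hg01 b with h | h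
    · rw [Set.indicator_apply]
      rw [if_neg (by simp [hs, h]), h]
    · rw [Set.indicator_apply, if_pos (by simpa [hs] using h), Pi.one_apply, h]
  refine ⟨s, ?_, hind⟩
  by_cases hdef : ∃ E : Finset (α → M), ∀ b ∈ s, ∀ b' ∉ s, ∃ a ∈ E, ¬ (P a b ↔ P a b')
  · -- s is a boolean combination of the instances given by E
    obtain ⟨E, hE⟩ := hdef
    have base : ∀ a : α → M, (Set.univ : Set M).Definable L {b | P a b} := by
      intro a
      rw [Set.definable_iff_exists_formula_sum]
      refine ⟨φ.relabel (Sum.map (fun i => (⟨a i, trivial⟩ : (Set.univ : Set M))) id), ?_⟩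
      ext b
      rw [Set.mem_setOf_eq, Set.mem_setOf_eq, Language.Formula.realize_relabel, hP]
      congr! 1
      funext x
      cases x <;> rfl
    have hseq : s = ⋃ p ∈ Finset.univ.filter
        (fun p : E → Bool => ∃ b₀ ∈ s, ∀ a : E, P a.1 b₀ ↔ p a = true),
        ⋂ a ∈ (Finset.univ : Finset E), (if p a then {b | P a.1 b} else {b | P a.1 b}ᶜ) := by
      ext b
      constructor
      · intro hb
        have hpfilter : (fun a : E => decide (P a.1 b)) ∈ Finset.univ.filter
            (fun p : E → Bool => ∃ b₀ ∈ s, ∀ a : E, P a.1 b₀ ↔ p a = true) := by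
          refine Finset.mem_filter.mpr ⟨Finset.mem_univ _, b, hb, fun a => ?_⟩
          simp
        refine Set.mem_biUnion hpfilter ?_
        rw [Set.mem_iInter₂]
        intro a _
        by_cases h : P a.1 b
        · rw [if_pos (decide_eq_true h)]
          exact h
        · rw [if_neg (by simpa using h)]
          exact h
      · intro hb
        rw [Set.mem_iUnion₂] at hb
        obtain ⟨p, hp, hmem⟩ := hb
        obtain ⟨-, b₀, hb₀, hb₀p⟩ := Finset.mem_filter.mp hp
        rw [Set.mem_iInter₂] at hmem
        by_contra hbs
        obtain ⟨a, haE, hne⟩ := hE b₀ hb₀ b hbs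
        apply hne
        have h1 := hb₀p ⟨a, haE⟩
        have h2 := hmem ⟨a, haE⟩ (Finset.mem_univ _)
        by_cases hpa : p ⟨a, haE⟩ = true
        · rw [if_pos hpa] at h2
          exact ⟨fun _ => h2, fun _ => h1.mpr hpa⟩
        · rw [if_neg hpa] at h2
          exact ⟨fun hh => absurd (h1.mp hh) hpa, fun hh => absurd hh h2⟩
    rw [hseq]
    refine Set.definable_biUnion_finset (fun p => ?_) _
    refine Set.definable_biInter_finset (fun a => ?_) _
    by_cases hpa : p a
    · rw [if_pos hpa]; exact base a.1
    · rw [if_neg hpa]; exact (base a.1).compl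
  · -- otherwise, build sequences contradicting the double limit condition
    exfalso
    push_neg at hdef
    -- dependent choice
    obtain ⟨f, hfP, hfr⟩ := exists_seq_of_forall_finset_exists
      (fun t : (α → M) × (β → M) × (β → M) =>
        t.2.1 ∈ s ∧ t.2.2 ∉ s ∧ (P t.1 t.2.1 ↔ P t.1 t.2.2))
      (fun x y => (P y.1 x.2.1 ∧ ¬ P y.1 x.2.2) ∧ (P x.1 y.2.1 ↔ P x.1 y.2.2))
      (by
        intro F hF
        obtain ⟨a', ha'⟩ := happrox ((F.image (fun t => t.2.1)) ∪ (F.image (fun t => t.2.2)))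
        have ha'c : ∀ x ∈ F, P a' x.2.1 := by
          intro x hx
          have := ha' x.2.1 (Finset.mem_union_left _ (Finset.mem_image_of_mem _ hx))
          rw [(hF x hx).1] at this
          by_contra h
          rw [if_neg h] at this
          norm_num at this
        have ha'd : ∀ x ∈ F, ¬ P a' x.2.2 := by
          intro x hx
          have := ha' x.2.2 (Finset.mem_union_right _ (Finset.mem_image_of_mem _ hx))
          have hg0 : g x.2.2 = 0 := (hg01 x.2.2).resolve_right (hF x hx).2.1
          rw [hg0] at this
          by_contra h
          rw [if_pos h] at this
          norm_num at this
        obtain ⟨b, hb, b', hb', hagr⟩ := hdef ((F.image (fun t => t.1)) ∪ {a'})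
        refine ⟨(a', b, b'), ⟨hb, hb',
          hagr a' (Finset.mem_union_right _ (Finset.mem_singleton_self a'))⟩, fun x hx => ?_⟩
        exact ⟨⟨ha'c x hx, ha'd x hx⟩,
          hagr x.1 (Finset.mem_union_left _ (Finset.mem_image_of_mem _ hx))⟩)
    set a : ℕ → α → M := fun n => (f n).1 with ha
    set c : ℕ → β → M := fun n => (f n).2.1 with hc
    set d : ℕ → β → M := fun n => (f n).2.2 with hd
    have hcs : ∀ n, g (c n) = 1 := fun n => (hfP n).1
    have hds : ∀ n, g (d n) = 0 := fun n => (hg01 _).resolve_right (hfP n).2.1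
    have hagree : ∀ m n, m ≤ n → (P (a m) (c n) ↔ P (a m) (d n)) := by
      intro m n hmn
      rcases eq_or_lt_of_le hmn with rfl | h
      · exact (hfP m).2.2
      · exact (hfr m n h).2
    have hpast : ∀ n m, n < m → P (a m) (c n) ∧ ¬ P (a m) (d n) :=
      fun n m h => (hfr n m h).1
    obtain ⟨I, hImono, hIconv⟩ := exists_diag_subseq (fun m k => decide (P (a m) (c k)))
    choose v hv using hIconv
    obtain ⟨w, hw⟩ := exists_infinite_bool_fiber (Set.infinite_univ (α := ℕ)) v
    set J : ℕ → ℕ := Nat.nth (fun m => m ∈ Set.univ ∧ v m = w) with hJ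
    have hJmono : StrictMono J := Nat.nth_strictMono hw
    have hJw : ∀ m, v (J m) = w := fun m => (Nat.nth_mem_of_infinite hw m).2
    set W : ℝ := if w then 1 else 0 with hW
    -- the common inner limit in n
    have hinner : ∀ (e : ℕ → β → M), (∀ m n, J m ≤ I n → (P (a (J m)) (e n) ↔ P (a (J m)) (c (I n)))) →
        ∀ m, Tendsto (fun n => if P (a (J m)) (e n) then (1:ℝ) else 0) atTop (𝓝 W) := by
      intro e he m
      have heq : (fun n => if P (a (J m)) (e n) then (1:ℝ) else 0) =ᶠ[atTop] (fun _ => W) := by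
        filter_upwards [eventually_ge_atTop (J m)] with n hn
        have hIn : J m ≤ I n := hn.trans (hImono.le_apply)
        have h1 := hv (J m) n hn
        rw [hJw m] at h1
        rw [hW]
        by_cases hp : P (a (J m)) (e n)
        · rw [if_pos hp]
          have : P (a (J m)) (c (I n)) := (he m n hIn).mp hp
          rw [if_pos]
          simpa [this] using h1.symm
        · rw [if_neg hp]
          have : ¬ P (a (J m)) (c (I n)) := fun h => hp ((he m n hIn).mpr h)
          rw [if_neg]
          simpa [this] using h1.symm
      exact Tendsto.congr' heq.symm tendsto_const_nhds
    have h1W : (1 : ℝ) = W := by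
      refine hdl (fun m => a (J m)) (fun n => c (I n)) (fun _ => 1) (fun _ => W) 1 W
        (fun n => ?_) tendsto_const_nhds
        (hinner (fun n => c (I n)) (fun m n _ => Iff.rfl)) tendsto_const_nhds
      have heq : (fun m => if φ.Realize (Sum.elim (a (J m)) (c (I n))) then (1:ℝ) else 0)
          =ᶠ[atTop] (fun _ => 1) := by
        filter_upwards [eventually_gt_atTop (I n)] with m hm
        have hlt : I n < J m := hm.trans_le (hJmono.le_apply)
        exact if_pos ((hpast (I n) (J m) hlt).1)
      exact Tendsto.congr' heq.symm tendsto_const_nhds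
    have h0W : (0 : ℝ) = W := by
      refine hdl (fun m => a (J m)) (fun n => d (I n)) (fun _ => 0) (fun _ => W) 0 W
        (fun n => ?_) tendsto_const_nhds
        (hinner (fun n => d (I n)) (fun m n h => hagree (J m) (I n) h |>.symm)) tendsto_const_nhds
      have heq : (fun m => if φ.Realize (Sum.elim (a (J m)) (d (I n))) then (1:ℝ) else 0)
          =ᶠ[atTop] (fun _ => 0) := by
        filter_upwards [eventually_gt_atTop (I n)] with m hm
        have hlt : I n < J m := hm.trans_le (hJmono.le_apply)
        exact if_neg ((hpast (I n) (J m) hlt).2)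
      exact Tendsto.congr' heq.symm tendsto_const_nhds
    rw [← h1W] at h0W
    norm_num at h0W
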